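/- For a finite poset P on p elements, the evacuation operator ε = (τ₁τ₂⋯τ_{p-1})(τ₁τ₂⋯τ_{p-2})⋯(τ₁τ₂)(τ₁) on the set of linear extensions of P is an involution: ε² is the identity. -/

import Mathlib

open scoped Classical in
/-- The operator `τ` acting at (0-based) positions `i, i+1` of a word: it swaps the
entries in positions `i` and `i+1` if they are incomparable in `α`, and otherwise
fixes the word.  (This is the operator `τ_{i+1}` of the paper, in 1-based indexing.) -/
noncomputable def tauP {α : Type*} [PartialOrder α] (i : ℕ) (l : List α) : List α :=
  if h : i + 1 < l.length then
    if l[i]'(Nat.lt_of_succ_lt h) ≤ l[i + 1]'h ∨ l[i + 1]'h ≤ l[i]'(Nat.lt_of_succ_lt h) then l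
    else (l.set i (l[i + 1]'h)).set (i + 1) (l[i]'(Nat.lt_of_succ_lt h))
  else l

/-- `l` is a linear extension of the finite poset `α`, written as a word:
it lists every element exactly once, and comparable elements appear in order. -/
def IsLinExt {α : Type*} [PartialOrder α] (l : List α) : Prop :=
  l.Nodup ∧ (∀ x : α, x ∈ l) ∧
    ∀ i j : Fin l.length, l.get i < l.get j → (i : ℕ) < (j : ℕ)

/-- Apply a sequence of the operators `τ` (given by their 0-based indices),
left to right. -/
noncomputable def applyTau {α : Type*} [PartialOrder α] (is : List ℕ) (l : List α) : List α :=
  is.foldl (fun acc i => tauP i acc) l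

/-- Indices (0-based) of the promotion operator `∂ = τ₁τ₂⋯τ_{p-1}`. -/
def promoIdx (p : ℕ) : List ℕ := List.range (p - 1)

/-- Indices (0-based) of the evacuation operator
`ε = (τ₁⋯τ_{p-1})(τ₁⋯τ_{p-2})⋯(τ₁τ₂)τ₁`. -/
def evacIdx (p : ℕ) : List ℕ :=
  (((List.range (p - 1)).reverse).map (fun k => List.range (k + 1))).flatten

/-- Indices (0-based) of the dual evacuation operator
`ε* = (τ_{p-1}⋯τ₁)(τ_{p-1}⋯τ₂)⋯τ_{p-1}`. -/
def dualEvacIdx (p : ℕ) : List ℕ :=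
  ((List.range (p - 1)).map (fun k => ((List.range' k (p - 1 - k))).reverse)).flatten

section Aux
variable {α : Type*} [PartialOrder α]

lemma tauP_of_not_lt {i : ℕ} {l : List α} (h : ¬ i + 1 < l.length) : tauP i l = l := by
  unfold tauP; rw [dif_neg h]

lemma tauP_of_cmp {i : ℕ} {l : List α} (h : i + 1 < l.length)
    (hc : l[i]'(Nat.lt_of_succ_lt h) ≤ l[i + 1]'h ∨ l[i + 1]'h ≤ l[i]'(Nat.lt_of_succ_lt h)) :
    tauP i l = l := by
  unfold tauP; rw [dif_pos h, if_pos hc]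

lemma tauP_of_not_cmp {i : ℕ} {l : List α} (h : i + 1 < l.length)
    (hc : ¬ (l[i]'(Nat.lt_of_succ_lt h) ≤ l[i + 1]'h ∨ l[i + 1]'h ≤ l[i]'(Nat.lt_of_succ_lt h))) :
    tauP i l = (l.set i (l[i + 1]'h)).set (i + 1) (l[i]'(Nat.lt_of_succ_lt h)) := by
  unfold tauP; rw [dif_pos h, if_neg hc]

lemma length_tauP (i : ℕ) (l : List α) : (tauP i l).length = l.length := by
  unfold tauP; split_ifs <;> simp

lemma set_self_getElem (l : List α) (i : ℕ) (h : i < l.length) : l.set i (l[i]'h) = l := by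
  apply List.ext_getElem (by simp)
  intro n h1 h2
  rw [List.getElem_set]
  split <;> simp_all

lemma getElem_tauP (j k : ℕ) (l : List α) (hk : k < l.length) (h1 : k ≠ j) (h2 : k ≠ j + 1) :
    (tauP j l)[k]'(by rw [length_tauP]; exact hk) = l[k] := by
  by_cases hj : j + 1 < l.length
  · by_cases hc : l[j]'(Nat.lt_of_succ_lt hj) ≤ l[j + 1]'hj ∨
        l[j + 1]'hj ≤ l[j]'(Nat.lt_of_succ_lt hj)
    · simp only [tauP_of_cmp hj hc]
    · simp only [tauP_of_not_cmp hj hc]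
      rw [List.getElem_set_ne (Ne.symm h2), List.getElem_set_ne (Ne.symm h1)]
  · simp only [tauP_of_not_lt hj]

lemma tauP_set (j i : ℕ) (x : α) (l : List α) (h1 : i ≠ j) (h2 : i ≠ j + 1) :
    tauP j (l.set i x) = (tauP j l).set i x := by
  by_cases hj : j + 1 < l.length
  · have hj' : j + 1 < (l.set i x).length := by simpa using hj
    have g1 : (l.set i x)[j]'(Nat.lt_of_succ_lt hj') = l[j]'(Nat.lt_of_succ_lt hj) :=
      List.getElem_set_ne h1 _
    have g2 : (l.set i x)[j + 1]'hj' = l[j + 1]'hj := List.getElem_set_ne h2 _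
    by_cases hc : l[j]'(Nat.lt_of_succ_lt hj) ≤ l[j + 1]'hj ∨
        l[j + 1]'hj ≤ l[j]'(Nat.lt_of_succ_lt hj)
    · rw [tauP_of_cmp hj hc, tauP_of_cmp hj' (by rw [g1, g2]; exact hc)]
    · rw [tauP_of_not_cmp hj hc, tauP_of_not_cmp hj' (by rw [g1, g2]; exact hc)]
      rw [g1, g2, List.set_comm _ _ h1, List.set_comm _ _ h2]
  · rw [tauP_of_not_lt hj, tauP_of_not_lt (by simpa using hj : ¬ j + 1 < (l.set i x).length)]

lemma tauP_tauP (i : ℕ) (l : List α) : tauP i (tauP i l) = l := by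
  by_cases hi : i + 1 < l.length
  · by_cases hc : l[i]'(Nat.lt_of_succ_lt hi) ≤ l[i + 1]'hi ∨
        l[i + 1]'hi ≤ l[i]'(Nat.lt_of_succ_lt hi)
    · rw [tauP_of_cmp hi hc, tauP_of_cmp hi hc]
    · rw [tauP_of_not_cmp hi hc]
      have hlen : i + 1 < ((l.set i (l[i + 1]'hi)).set (i + 1)
          (l[i]'(Nat.lt_of_succ_lt hi))).length := by simpa using hi
      have e1 : ((l.set i (l[i + 1]'hi)).set (i + 1)
          (l[i]'(Nat.lt_of_succ_lt hi)))[i]'(Nat.lt_of_succ_lt hlen) = l[i + 1]'hi := by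
        rw [List.getElem_set_ne (by omega), List.getElem_set_self]
      have e2 : ((l.set i (l[i + 1]'hi)).set (i + 1)
          (l[i]'(Nat.lt_of_succ_lt hi)))[i + 1]'hlen = l[i]'(Nat.lt_of_succ_lt hi) := by
        rw [List.getElem_set_self]
      rw [tauP_of_not_cmp hlen (by rw [e1, e2]; tauto), e1, e2,
        List.set_comm _ _ (show i + 1 ≠ i by omega), List.set_set, List.set_set,
        set_self_getElem, set_self_getElem]
  · rw [tauP_of_not_lt hi, tauP_of_not_lt hi]

lemma tauP_comm {i j : ℕ} (hij : i + 2 ≤ j) (l : List α) :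
    tauP j (tauP i l) = tauP i (tauP j l) := by
  by_cases hi : i + 1 < l.length
  · have hi' : i + 1 < (tauP j l).length := by rw [length_tauP]; exact hi
    have hgi : (tauP j l)[i]'(Nat.lt_of_succ_lt hi') = l[i]'(Nat.lt_of_succ_lt hi) :=
      getElem_tauP j i l (Nat.lt_of_succ_lt hi) (by omega) (by omega)
    have hgi1 : (tauP j l)[i + 1]'hi' = l[i + 1]'hi :=
      getElem_tauP j (i + 1) l hi (by omega) (by omega)
    by_cases hc : l[i]'(Nat.lt_of_succ_lt hi) ≤ l[i + 1]'hi ∨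
        l[i + 1]'hi ≤ l[i]'(Nat.lt_of_succ_lt hi)
    · rw [tauP_of_cmp hi hc, tauP_of_cmp hi' (by rw [hgi, hgi1]; exact hc)]
    · rw [tauP_of_not_cmp hi hc, tauP_of_not_cmp hi' (by rw [hgi, hgi1]; exact hc)]
      rw [hgi, hgi1, tauP_set _ _ _ _ (by omega) (by omega),
        tauP_set _ _ _ _ (by omega) (by omega)]
  · rw [tauP_of_not_lt hi, tauP_of_not_lt (show ¬ i + 1 < (tauP j l).length by
      rw [length_tauP]; exact hi)]

lemma applyTau_nil (l : List α) : applyTau [] l = l := rfl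

lemma applyTau_cons (a : ℕ) (w : List ℕ) (l : List α) :
    applyTau (a :: w) l = applyTau w (tauP a l) := rfl

lemma applyTau_append (w₁ w₂ : List ℕ) (l : List α) :
    applyTau (w₁ ++ w₂) l = applyTau w₂ (applyTau w₁ l) :=
  List.foldl_append

lemma applyTau_reverse_applyTau (w : List ℕ) (l : List α) :
    applyTau w.reverse (applyTau w l) = l := by
  induction w generalizing l with
  | nil => rfl
  | cons a t ih =>
      rw [applyTau_cons, List.reverse_cons, applyTau_append, ih, applyTau_cons,
        applyTau_nil, tauP_tauP]

lemma applyTau_applyTau_reverse (w : List ℕ) (l : List α) :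
    applyTau w (applyTau w.reverse l) = l := by
  have h := applyTau_reverse_applyTau w.reverse (l := l)
  rwa [List.reverse_reverse] at h

lemma tauP_applyTau_comm {j : ℕ} {w : List ℕ} (hw : ∀ i ∈ w, i + 2 ≤ j) (l : List α) :
    tauP j (applyTau w l) = applyTau w (tauP j l) := by
  induction w generalizing l with
  | nil => rfl
  | cons a t ih =>
      rw [applyTau_cons, applyTau_cons, ih (fun i hi => hw i (List.mem_cons_of_mem a hi)),
        tauP_comm (hw a List.mem_cons_self)]

/-- The evacuation word, recursively. -/
def Ew : ℕ → List ℕ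
  | 0 => []
  | n + 1 => List.range (n + 1) ++ Ew n

lemma mem_Ew {i n : ℕ} (h : i ∈ Ew n) : i < n := by
  induction n with
  | zero => simp [Ew] at h
  | succ m ih =>
      rw [Ew, List.mem_append] at h
      rcases h with h | h
      · exact List.mem_range.mp h
      · exact Nat.lt_succ_of_lt (ih h)

lemma evacIdx_flatten_eq (n : ℕ) :
    (((List.range n).reverse).map (fun k => List.range (k + 1))).flatten = Ew n := by
  induction n with
  | zero => simp [Ew]
  | succ m ih =>
      rw [List.range_succ, List.reverse_append, List.reverse_singleton, List.singleton_append,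
        List.map_cons, List.flatten_cons, ih, Ew]

lemma evacIdx_eq (p : ℕ) : evacIdx p = Ew (p - 1) := evacIdx_flatten_eq (p - 1)

lemma range_succ_reverse (k : ℕ) :
    (List.range (k + 1)).reverse = k :: (List.range k).reverse := by
  rw [List.range_succ, List.reverse_append, List.reverse_singleton, List.singleton_append]

lemma key (k : ℕ) (l : List α) :
    applyTau (List.range (k + 1)) (applyTau (Ew k) l)
      = applyTau (Ew k) (applyTau (List.range (k + 1)).reverse l) := by
  induction k generalizing l with
  | zero => simp [Ew, range_succ_reverse, List.range_succ, applyTau_nil, applyTau_cons]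
  | succ k ih =>
      have hEw : ∀ x : List α, applyTau (Ew (k + 1)) x
          = applyTau (Ew k) (applyTau (List.range (k + 1)) x) := fun x => by
        rw [Ew, applyTau_append]
      have hcomm : ∀ x : List α, tauP (k + 1) (applyTau (Ew k) x)
          = applyTau (Ew k) (tauP (k + 1) x) := fun x =>
        tauP_applyTau_comm (fun i hi => by have := mem_Ew hi; omega) x
      calc applyTau (List.range (k + 2)) (applyTau (Ew (k + 1)) l)
          = tauP (k + 1) (applyTau (List.range (k + 1))
              (applyTau (Ew k) (applyTau (List.range (k + 1)) l))) := by
            rw [hEw, show List.range (k + 2) = List.range (k + 1) ++ [k + 1] from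
              List.range_succ, applyTau_append, applyTau_cons, applyTau_nil]
        _ = tauP (k + 1) (applyTau (Ew k) (applyTau (List.range (k + 1)).reverse
              (applyTau (List.range (k + 1)) l))) := by rw [ih]
        _ = applyTau (Ew k) (tauP (k + 1) l) := by
            rw [applyTau_reverse_applyTau, hcomm]
        _ = applyTau (Ew (k + 1)) (applyTau (List.range (k + 2)).reverse l) := by
            rw [hEw]
            congr 1
            rw [range_succ_reverse (k + 1), applyTau_cons, applyTau_applyTau_reverse]

lemma Ew_involution (n : ℕ) (l : List α) : applyTau (Ew n) (applyTau (Ew n) l) = l := by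
  induction n generalizing l with
  | zero => rfl
  | succ k ih =>
      rw [Ew, applyTau_append, applyTau_append, key, applyTau_reverse_applyTau, ih]

end Aux

/-- For a finite poset `P` on `p` elements, the evacuation operator
`ε = (τ₁⋯τ_{p-1})(τ₁⋯τ_{p-2})⋯(τ₁τ₂)τ₁` on linear extensions of `P` is an involution. -/
theorem stmt4 {α : Type*} [Fintype α] [PartialOrder α] (p : ℕ) (hp : p = Fintype.card α)
    (l : List α) (hl : IsLinExt l) :
    applyTau (evacIdx p) (applyTau (evacIdx p) l) = l := by
  rw [evacIdx_eq]; exact Ew_involution (p - 1) l
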